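/- Let H be a Hilbert space, ξ ∈ H, and let C ⊆ H be a nonempty closed convex bounded set with ξ ∉ C. Then there exists η ∈ H such that ‖η - ζ‖ < ‖ξ - ζ‖ for every ζ ∈ C. In fact η can be chosen in any dense subset Ω ⊆ H. -/

import Mathlib

open RealInnerProductSpace

theorem stmt_3 {H : Type*} [NormedAddCommGroup H] [InnerProductSpace ℝ H] [CompleteSpace H]
    (C : Set H) (hne : C.Nonempty) (hcl : IsClosed C) (hconv : Convex ℝ C)
    (hbd : Bornology.IsBounded C) (ξ : H) (hξ : ξ ∉ C) (Ω : Set H) (hΩ : Dense Ω) :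
    ∃ η ∈ Ω, ∀ ζ ∈ C, ‖η - ζ‖ < ‖ξ - ζ‖ := by
  obtain ⟨p, hpC, hp⟩ := exists_norm_eq_iInf_of_complete_convex hne hcl.isComplete hconv ξ
  have hproj : ∀ w ∈ C, (inner ℝ (ξ - p) (w - p) : ℝ) ≤ 0 :=
    (norm_eq_iInf_iff_real_inner_le_zero hconv hpC).mp hp
  set d : ℝ := ‖ξ - p‖ with hd
  have hd0 : 0 < d := by
    rw [hd, norm_pos_iff, sub_ne_zero]
    rintro rfl; exact hξ hpC
  have key : ∀ ζ ∈ C, ‖p - ζ‖ ^ 2 + d ^ 2 ≤ ‖ξ - ζ‖ ^ 2 := by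
    intro ζ hζ
    have h1 : (inner ℝ (ξ - p) (ζ - p) : ℝ) ≤ 0 := hproj ζ hζ
    have expand : ‖ξ - ζ‖ ^ 2 = ‖ξ - p‖ ^ 2 + 2 * (inner ℝ (ξ - p) (p - ζ) : ℝ) + ‖p - ζ‖ ^ 2 := by
      have h : ξ - ζ = (ξ - p) + (p - ζ) := by abel
      rw [h, norm_add_sq_real]
    have h2 : (inner ℝ (ξ - p) (p - ζ) : ℝ) = -(inner ℝ (ξ - p) (ζ - p) : ℝ) := by
      rw [← inner_neg_right]; congr 1; abel
    nlinarith [h1, expand]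
  obtain ⟨D, hD⟩ := (Metric.isBounded_iff_subset_closedBall p).mp hbd
  have hD' : ∀ ζ ∈ C, ‖p - ζ‖ ≤ D := by
    intro ζ hζ
    have h := hD hζ
    rwa [Metric.mem_closedBall, dist_comm, dist_eq_norm] at h
  have hDnn : 0 ≤ D := le_trans (norm_nonneg _) (hD' p hpC)
  set K : ℝ := d + 2 * D with hK
  have hK0 : 0 < K := by positivity
  set ε : ℝ := d ^ 2 / (2 * K) with hε
  have hε0 : 0 < ε := by positivity
  obtain ⟨η, hηΩ, hηp⟩ := Metric.mem_closure_iff.mp (hΩ p) ε hε0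
  rw [dist_comm, dist_eq_norm] at hηp
  refine ⟨η, hηΩ, fun ζ hζ => ?_⟩
  have hb : ‖p - ζ‖ ≤ D := hD' ζ hζ
  have ha : ‖ξ - ζ‖ ≤ K := by
    have h : ξ - ζ = (ξ - p) + (p - ζ) := by abel
    calc ‖ξ - ζ‖ ≤ ‖ξ - p‖ + ‖p - ζ‖ := by rw [h]; exact norm_add_le _ _
    _ ≤ d + 2 * D := by rw [← hd]; linarith
  have hgap : d ^ 2 / K ≤ ‖ξ - ζ‖ - ‖p - ζ‖ := by
    have hkey := key ζ hζ
    have hnn1 : 0 ≤ ‖ξ - ζ‖ := norm_nonneg _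
    have hnn2 : 0 ≤ ‖p - ζ‖ := norm_nonneg _
    have haab : ‖ξ - ζ‖ + ‖p - ζ‖ ≤ K := by
      have h : ξ - ζ = (ξ - p) + (p - ζ) := by abel
      have ht : ‖ξ - ζ‖ ≤ ‖ξ - p‖ + ‖p - ζ‖ := by rw [h]; exact norm_add_le _ _
      rw [← hd] at ht; linarith
    have hab : ‖p - ζ‖ ≤ ‖ξ - ζ‖ := by nlinarith [hkey, hd0, hnn1, hnn2]
    rw [div_le_iff₀ hK0]
    nlinarith [hkey, haab, hab, mul_le_mul_of_nonneg_left haab (sub_nonneg.mpr hab)]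
  have htri : ‖η - ζ‖ ≤ ‖η - p‖ + ‖p - ζ‖ := by
    have h : η - ζ = (η - p) + (p - ζ) := by abel
    rw [h]; exact norm_add_le _ _
  have hlt : ε < d ^ 2 / K := by
    rw [hε, div_lt_div_iff₀ (by positivity) hK0]
    nlinarith [mul_pos (pow_pos hd0 2) hK0]
  linarith
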